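/- arXiv:math/0606210 — 4 statements merged into one kernel-verified Lean document; each statement's English description precedes it below -/
import Mathlib

section
/- Let f = Σ_{k≥0} f_k z^k be a power series of one variable with |f_k| ≤ A (k+1)^m for all k (order of growth (A, m), A ≥ 1, m ≥ 1). Then its d-th derivative f^{(d)} has order of growth (A·2^{dm + d(d−1)/2}, m + d); that is, the coefficients c_k of f^{(d)} satisfy |c_k| ≤ A 2^{dm+d(d−1)/2} (k+1)^{m+d}. -/
-- helper: factorial ratio bound in ℕ
lemma fact_ratio_bound : ∀ (d k : ℕ),
    (k + d).factorial / k.factorial ≤ 2 ^ (d * (d - 1) / 2) * (k + 1) ^ d := by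
  intro d
  induction d with
  | zero => intro k; simp [Nat.div_self k.factorial_pos]
  | succ e ih =>
      intro k
      have hdvd : k.factorial ∣ (k + e).factorial :=
        Nat.factorial_dvd_factorial (Nat.le_add_right _ _)
      have hstep : (k + (e + 1)).factorial / k.factorial
          = (k + e + 1) * ((k + e).factorial / k.factorial) := by
        rw [← Nat.add_assoc, Nat.factorial_succ, Nat.mul_div_assoc _ hdvd]
      have h1 : k + e + 1 ≤ 2 ^ e * (k + 1) := by
        have he : e < 2 ^ e := Nat.lt_two_pow_self (n := e)
        have hk : k ≤ 2 ^ e * k := Nat.le_mul_of_pos_left k (Nat.two_pow_pos e)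
        have : 2 ^ e * (k + 1) = 2 ^ e * k + 2 ^ e := by ring
        omega
      have hexp : (e + 1) * (e + 1 - 1) / 2 = e + e * (e - 1) / 2 := by
        have h2 : 2 ∣ e * (e - 1) := by
          cases e with
          | zero => simp
          | succ n => simpa [Nat.succ_sub_one, Nat.mul_comm] using (Nat.even_mul_succ_self n).two_dvd
        have h3 : (e + 1) * (e + 1 - 1) = 2 * e + e * (e - 1) := by
          cases e with
          | zero => simp
          | succ n => simp [Nat.succ_sub_one]; ring
        rw [h3, Nat.mul_add_div (by norm_num)]
      calc (k + (e + 1)).factorial / k.factorial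
          = (k + e + 1) * ((k + e).factorial / k.factorial) := hstep
        _ ≤ (2 ^ e * (k + 1)) * (2 ^ (e * (e - 1) / 2) * (k + 1) ^ e) :=
            Nat.mul_le_mul h1 (ih k)
        _ = 2 ^ (e + e * (e - 1) / 2) * (k + 1) ^ (e + 1) := by ring
        _ = 2 ^ ((e + 1) * (e + 1 - 1) / 2) * (k + 1) ^ (e + 1) := by rw [hexp]

theorem stmt7 (f : ℕ → ℂ) (A : ℝ) (m d : ℕ) (hA : 1 ≤ A) (hm : 1 ≤ m)
    (hf : ∀ k, ‖f k‖ ≤ A * ((k : ℝ) + 1) ^ m) :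
    ∀ k, ‖(((k + d).factorial / k.factorial : ℕ) : ℂ) * f (k + d)‖ ≤
      A * 2 ^ (d * m + d * (d - 1) / 2) * ((k : ℝ) + 1) ^ (m + d) := by
  intro k
  set N : ℕ := (k + d).factorial / k.factorial with hN
  have hnorm : ‖((N : ℂ)) * f (k + d)‖ = (N : ℝ) * ‖f (k + d)‖ := by
    rw [norm_mul, Complex.norm_natCast]
  have hNb : (N : ℝ) ≤ 2 ^ (d * (d - 1) / 2) * ((k : ℝ) + 1) ^ d := by
    have := fact_ratio_bound d k
    calc (N : ℝ) ≤ ((2 ^ (d * (d - 1) / 2) * (k + 1) ^ d : ℕ) : ℝ) := Nat.cast_le.mpr this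
      _ = 2 ^ (d * (d - 1) / 2) * ((k : ℝ) + 1) ^ d := by push_cast; ring
  have hfb : ‖f (k + d)‖ ≤ A * (2 ^ (d * m) * ((k : ℝ) + 1) ^ m) := by
    have h1 := hf (k + d)
    have h2 : ((k + d : ℕ) : ℝ) + 1 ≤ 2 ^ d * ((k : ℝ) + 1) := by
      have : k + d + 1 ≤ 2 ^ d * (k + 1) := by
        have he : d < 2 ^ d := Nat.lt_two_pow_self (n := d)
        have hk : k ≤ 2 ^ d * k := Nat.le_mul_of_pos_left k (Nat.two_pow_pos d)
        have : 2 ^ d * (k + 1) = 2 ^ d * k + 2 ^ d := by ring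
        omega
      calc ((k + d : ℕ) : ℝ) + 1 = (((k + d + 1 : ℕ)) : ℝ) := by push_cast; ring
        _ ≤ ((2 ^ d * (k + 1) : ℕ) : ℝ) := Nat.cast_le.mpr this
        _ = 2 ^ d * ((k : ℝ) + 1) := by push_cast; ring
    have h3 : (((k + d : ℕ) : ℝ) + 1) ^ m ≤ (2 ^ d * ((k : ℝ) + 1)) ^ m := by
      apply pow_le_pow_left₀ (by positivity) h2
    calc ‖f (k + d)‖ ≤ A * (((k + d : ℕ) : ℝ) + 1) ^ m := h1
      _ ≤ A * (2 ^ d * ((k : ℝ) + 1)) ^ m := by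
          apply mul_le_mul_of_nonneg_left h3 (by linarith)
      _ = A * (2 ^ (d * m) * ((k : ℝ) + 1) ^ m) := by
          rw [mul_pow, ← pow_mul]
  have hnn : (0:ℝ) ≤ ‖f (k + d)‖ := norm_nonneg _
  have hNnn : (0:ℝ) ≤ (N : ℝ) := Nat.cast_nonneg _
  calc ‖((N : ℂ)) * f (k + d)‖ = (N : ℝ) * ‖f (k + d)‖ := hnorm
    _ ≤ (2 ^ (d * (d - 1) / 2) * ((k : ℝ) + 1) ^ d) * (A * (2 ^ (d * m) * ((k : ℝ) + 1) ^ m)) := by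
        apply mul_le_mul hNb hfb hnn (by positivity)
    _ = A * 2 ^ (d * m + d * (d - 1) / 2) * ((k : ℝ) + 1) ^ (m + d) := by
        rw [pow_add, pow_add]; ring
end

section
/- Let f = Σ_k f_k z^k be a power series in g variables of order of growth (A, n) with A ≥ 1 and n ≥ (1,…,1). Let c = (c_1,…,c_g) with each |c_m| < 1, and define the recentered series F_c(y) = f(c + y ⋆ (1 − ‖c‖)), where (y ⋆ (1−‖c‖))_m = y_m (1 − |c_m|). Then F_c is a power series in y with order of growth (A_c, n + 1), where A_c = n! A e^{g + |n|_1} 2^{g + |n|_1} ∏_m (1 − |c_m|)^{−n_m − 2}. -/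
open scoped ENNReal

lemma my_pow_le_descFactorial (n l : ℕ) : (l+1)^n ≤ (l+n).descFactorial n := by
  induction n with
  | zero => simp
  | succ n ih =>
    rw [Nat.descFactorial_succ, pow_succ]
    rw [show l + (n+1) = (l+n)+1 by omega]
    rw [show l + n + 1 - n = l + 1 by omega]
    calc (l+1)^n * (l+1) ≤ (l+n).descFactorial n * (l+1) := Nat.mul_le_mul_right _ ih
    _ ≤ ((l+n)+1).descFactorial n * (l+1) := Nat.mul_le_mul_right _ (Nat.descFactorial_le _ (by omega))
    _ = (l+1) * ((l+n)+1).descFactorial n := Nat.mul_comm _ _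

lemma my_pow_le_fact_choose (n l : ℕ) : (l+1)^n ≤ n.factorial * (l+n).choose n := by
  rw [← Nat.descFactorial_eq_factorial_mul_choose]
  exact my_pow_le_descFactorial n l

lemma my_choose_id (n k l : ℕ) :
    (l+n).choose n * l.choose k = (l+n).choose (n+k) * (n+k).choose n := by
  rcases Nat.lt_or_ge l k with h | h
  · rw [Nat.choose_eq_zero_of_lt h, Nat.choose_eq_zero_of_lt (show l+n < n+k by omega),
      Nat.mul_zero, Nat.zero_mul]
  · have h1 : (l+n).choose n * n.factorial * l.factorial = (l+n).factorial := by
      have := Nat.choose_mul_factorial_mul_factorial (Nat.le_add_left n l)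
      rwa [show l + n - n = l by omega] at this
    have h2 : l.choose k * k.factorial * (l-k).factorial = l.factorial :=
      Nat.choose_mul_factorial_mul_factorial h
    have h3 : (n+k).choose n * n.factorial * k.factorial = (n+k).factorial := by
      have := Nat.choose_mul_factorial_mul_factorial (Nat.le_add_right n k)
      rwa [show n + k - n = k by omega] at this
    have h4 : (l+n).choose (n+k) * (n+k).factorial * (l-k).factorial = (l+n).factorial := by
      have := Nat.choose_mul_factorial_mul_factorial (show n+k ≤ l+n by omega)
      rwa [show l + n - (n+k) = l - k by omega] at this
    have hpos : 0 < n.factorial * k.factorial * (l-k).factorial * l.factorial :=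
      Nat.mul_pos (Nat.mul_pos (Nat.mul_pos n.factorial_pos k.factorial_pos)
        (l-k).factorial_pos) l.factorial_pos
    apply Nat.eq_of_mul_eq_mul_right hpos
    calc (l+n).choose n * l.choose k * (n.factorial * k.factorial * (l-k).factorial * l.factorial)
        = ((l+n).choose n * n.factorial * l.factorial) *
            (l.choose k * k.factorial * (l-k).factorial) := by ring
      _ = (l+n).factorial * l.factorial := by rw [h1, h2]
      _ = ((l+n).choose (n+k) * (n+k).factorial * (l-k).factorial) * l.factorial := by rw [h4]
      _ = ((l+n).choose (n+k) * ((n+k).choose n * n.factorial * k.factorial) *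
            (l-k).factorial) * l.factorial := by rw [h3]
      _ = (l+n).choose (n+k) * (n+k).choose n *
            (n.factorial * k.factorial * (l-k).factorial * l.factorial) := by ring

lemma my_choose_le_pow (n k : ℕ) : (n+k).choose n ≤ (k+1)^n := by
  induction n with
  | zero => simp
  | succ n ih =>
    have key : (n+k+1) * ((n+k).choose n) = (n+1+k).choose (n+1) * (n+1) := by
      have := Nat.add_one_mul_choose_eq (n+k) n
      simpa [Nat.succ_eq_add_one, show n+k+1 = n+1+k by omega] using this
    refine Nat.le_of_mul_le_mul_right ?_ (Nat.succ_pos n)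
    rw [← key]
    calc (n+k+1) * (n+k).choose n ≤ ((k+1)*(n+1)) * (k+1)^n :=
          Nat.mul_le_mul (by nlinarith) ih
      _ = (k+1)^(n+1) * (n+1) := by ring

lemma my_nat_bound (n k l : ℕ) :
    (l+1)^n * l.choose k ≤ n.factorial * (k+1)^n * ((l+n).choose (n+k)) := by
  calc (l+1)^n * l.choose k ≤ (n.factorial * (l+n).choose n) * l.choose k :=
        Nat.mul_le_mul_right _ (my_pow_le_fact_choose n l)
    _ = n.factorial * ((l+n).choose (n+k) * (n+k).choose n) := by rw [Nat.mul_assoc, my_choose_id]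
    _ ≤ n.factorial * ((l+n).choose (n+k) * (k+1)^n) :=
        Nat.mul_le_mul_left _ (Nat.mul_le_mul_left _ (my_choose_le_pow n k))
    _ = n.factorial * (k+1)^n * ((l+n).choose (n+k)) := by ring

lemma my_tsum_pi (g : ℕ) (h : Fin g → ℕ → ℝ≥0∞) :
    ∑' x : Fin g → ℕ, ∏ m, h m (x m) = ∏ m, ∑' j, h m j := by
  induction g with
  | zero => simp [tsum_fintype]
  | succ g ih =>
    rw [← (Fin.consEquiv (fun _ : Fin (g+1) => ℕ)).tsum_eq, ENNReal.tsum_prod']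
    simp only [Fin.consEquiv_apply]
    have : ∀ (a : ℕ) (x : Fin g → ℕ),
        (∏ m, h m (Fin.cons (α := fun _ => ℕ) a x m)) = h 0 a * ∏ m : Fin g, h m.succ (x m) := by
      intro a x
      rw [Fin.prod_univ_succ]
      simp
    simp only [this]
    rw [Fin.prod_univ_succ]
    simp only [ENNReal.tsum_mul_left, ENNReal.tsum_mul_right]
    rw [ih (fun m j => h m.succ j)]

lemma my_ofReal_prod {ι : Type*} [DecidableEq ι] (s : Finset ι) (f : ι → ℝ)
    (hf : ∀ i ∈ s, 0 ≤ f i) :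
    ENNReal.ofReal (∏ i ∈ s, f i) = ∏ i ∈ s, ENNReal.ofReal (f i) := by
  induction s using Finset.induction_on with
  | empty => simp
  | insert _ _ hx ih =>
    rename_i a s
    rw [Finset.prod_insert hx, Finset.prod_insert hx,
      ENNReal.ofReal_mul (hf a (Finset.mem_insert_self a s)),
      ih (fun i hi => hf i (Finset.mem_insert_of_mem hi))]

lemma my_oneD (n k : ℕ) {r : ℝ} (h0 : 0 ≤ r) (h1 : r < 1) :
    Summable (fun j : ℕ => ((j:ℝ)+1)^n * (j.choose k) * r^(j-k)) ∧
    ∑' j : ℕ, (((j:ℝ)+1)^n * (j.choose k) * r^(j-k)) ≤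
      (n.factorial : ℝ) * ((k:ℝ)+1)^n / (1-r)^(n+k+1) := by
  have hr : ‖r‖ < 1 := by rw [Real.norm_eq_abs, abs_of_nonneg h0]; exact h1
  set F : ℕ → ℝ := fun j => (((j+n).choose (n+k) : ℕ) : ℝ) * r^(j-k) with hF
  have hFshift : ∀ i : ℕ, F (i+k) = (((i + (n+k)).choose (n+k) : ℕ) : ℝ) * r^i := by
    intro i
    rw [hF]
    simp only
    rw [show i + k + n = i + (n+k) by omega, show i + k - k = i by omega]
  have hFsummable : Summable F := by
    rw [← summable_nat_add_iff k]
    simp only [hFshift]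
    exact summable_choose_mul_geometric_of_norm_lt_one (n+k) hr
  have hFtsum : ∑' j, F j = 1 / (1-r)^(n+k+1) := by
    rw [← Summable.sum_add_tsum_nat_add k hFsummable]
    have hz : ∀ j ∈ Finset.range k, F j = 0 := by
      intro j hj
      rw [Finset.mem_range] at hj
      rw [hF]
      simp only
      rw [Nat.choose_eq_zero_of_lt (show j + n < n + k by omega)]
      simp
    rw [Finset.sum_eq_zero hz, zero_add]
    simp only [hFshift]
    rw [tsum_choose_mul_geometric_of_norm_lt_one (n+k) hr]
  have hterm : ∀ j : ℕ, ((j:ℝ)+1)^n * (j.choose k) * r^(j-k) ≤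
      ((n.factorial : ℝ) * ((k:ℝ)+1)^n) * F j := by
    intro j
    rw [hF]
    simp only
    rw [← mul_assoc]
    apply mul_le_mul_of_nonneg_right _ (pow_nonneg h0 _)
    have := my_nat_bound n k j
    have hcast : (((j+1)^n * j.choose k : ℕ) : ℝ) ≤
        ((n.factorial * (k+1)^n * ((j+n).choose (n+k)) : ℕ) : ℝ) := Nat.cast_le.mpr this
    push_cast at hcast
    linarith
  have hnonneg : ∀ j : ℕ, 0 ≤ ((j:ℝ)+1)^n * (j.choose k) * r^(j-k) := by
    intro j
    positivity
  have hsum : Summable (fun j : ℕ => ((j:ℝ)+1)^n * (j.choose k) * r^(j-k)) :=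
    Summable.of_nonneg_of_le hnonneg hterm (hFsummable.mul_left _)
  refine ⟨hsum, ?_⟩
  calc ∑' j : ℕ, (((j:ℝ)+1)^n * (j.choose k) * r^(j-k))
      ≤ ∑' j : ℕ, ((n.factorial : ℝ) * ((k:ℝ)+1)^n) * F j :=
        Summable.tsum_le_tsum hterm hsum (hFsummable.mul_left _)
    _ = ((n.factorial : ℝ) * ((k:ℝ)+1)^n) * (1 / (1-r)^(n+k+1)) := by
        rw [tsum_mul_left, hFtsum]
    _ = (n.factorial : ℝ) * ((k:ℝ)+1)^n / (1-r)^(n+k+1) := by ring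

theorem stmt12 (g : ℕ) (f : (Fin g →₀ ℕ) → ℂ) (A : ℝ) (n : Fin g → ℕ)
    (hA : 1 ≤ A) (hn : ∀ m, 1 ≤ n m)
    (hf : ∀ k : Fin g →₀ ℕ, ‖f k‖ ≤ A * ∏ m, ((k m : ℝ) + 1) ^ n m)
    (c : Fin g → ℂ) (hc : ∀ m, ‖c m‖ < 1) :
    ∀ k : Fin g →₀ ℕ,
      ‖∑' l : Fin g →₀ ℕ, f l *
          ∏ m, ((l m).choose (k m) : ℂ) * c m ^ (l m - k m) * ((1 - ‖c m‖ : ℝ) : ℂ) ^ k m‖ ≤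
        (((∏ m, (n m).factorial : ℕ) : ℝ) * A * Real.exp ((g : ℝ) + ∑ m, (n m : ℝ)) *
            2 ^ (g + ∑ m, n m) / ∏ m, (1 - ‖c m‖) ^ (n m + 2)) *
          ∏ m, ((k m : ℝ) + 1) ^ (n m + 1) := by
  intro k
  have hA0 : (0:ℝ) ≤ A := le_trans zero_le_one hA
  set t : Fin g → ℝ := fun m => 1 - ‖c m‖ with ht_def
  have ht : ∀ m, 0 < t m := fun m => by simp only [ht_def]; linarith [hc m]
  have ht1 : ∀ m, t m ≤ 1 := fun m => by
    simp only [ht_def]; linarith [norm_nonneg (c m)]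
  -- the dominating function, coordinatewise
  set H : Fin g → ℕ → ℝ := fun m j =>
    ((j:ℝ)+1)^(n m) * ((j.choose (k m)):ℝ) * ‖c m‖^(j - k m) * (t m)^(k m) with hH_def
  have hHnonneg : ∀ m j, 0 ≤ H m j := by
    intro m j
    have := (ht m).le
    positivity
  have hone : ∀ m, Summable (fun j : ℕ => ((j:ℝ)+1)^(n m) * (j.choose (k m)) * ‖c m‖^(j - k m)) ∧
      ∑' j : ℕ, (((j:ℝ)+1)^(n m) * (j.choose (k m)) * ‖c m‖^(j - k m)) ≤
        ((n m).factorial : ℝ) * ((k m:ℝ)+1)^(n m) / (1-‖c m‖)^(n m + k m + 1) :=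
    fun m => my_oneD (n m) (k m) (norm_nonneg _) (hc m)
  have hHsummable : ∀ m, Summable (H m) := fun m => ((hone m).1).mul_right _
  set B : Fin g → ℝ := fun m =>
    ((n m).factorial : ℝ) * ((k m:ℝ)+1)^(n m) / (t m)^(n m + 1) with hB_def
  have hB0 : ∀ m, 0 ≤ B m := by
    intro m
    have := ht m
    positivity
  have hHtsum : ∀ m, ∑' j, H m j ≤ B m := by
    intro m
    have hsplit : ∑' j, H m j =
        (∑' j : ℕ, (((j:ℝ)+1)^(n m) * (j.choose (k m)) * ‖c m‖^(j - k m))) * (t m)^(k m) := by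
      rw [← tsum_mul_right]
    rw [hsplit]
    have hle := (hone m).2
    have step : (∑' j : ℕ, (((j:ℝ)+1)^(n m) * (j.choose (k m)) * ‖c m‖^(j - k m))) * (t m)^(k m)
        ≤ (((n m).factorial : ℝ) * ((k m:ℝ)+1)^(n m) / (t m)^(n m + k m + 1)) * (t m)^(k m) := by
      apply mul_le_mul_of_nonneg_right _ (pow_nonneg (ht m).le _)
      exact hle
    refine step.trans (le_of_eq ?_)
    have hpow : (t m)^(n m + k m + 1) = (t m)^(n m + 1) * (t m)^(k m) := by
      rw [← pow_add]
      congr 1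
      omega
    rw [hpow, ← div_div, div_mul_cancel₀ _ (pow_ne_zero _ (ne_of_gt (ht m)))]
  -- bound each term of the series
  have hnormF : ∀ l : Fin g →₀ ℕ,
      ‖f l * ∏ m, ((l m).choose (k m) : ℂ) * c m ^ (l m - k m) * ((1 - ‖c m‖ : ℝ) : ℂ) ^ k m‖
        ≤ A * ∏ m, H m (l m) := by
    intro l
    have hz : ∀ m : Fin g,
        ‖((l m).choose (k m) : ℂ) * c m ^ (l m - k m) * ((1 - ‖c m‖ : ℝ) : ℂ) ^ k m‖ =
          (((l m).choose (k m)):ℝ) * ‖c m‖^(l m - k m) * (t m)^(k m) := by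
      intro m
      rw [norm_mul, norm_mul, norm_pow, norm_pow, Complex.norm_natCast, Complex.norm_real,
        Real.norm_eq_abs, abs_of_nonneg (ht m).le]
    have hsplitH : A * ∏ m, H m (l m) = (A * ∏ m, (((l m):ℝ)+1)^(n m)) *
        ∏ m, ((((l m).choose (k m)):ℝ) * ‖c m‖^(l m - k m) * (t m)^(k m)) := by
      rw [mul_assoc, ← Finset.prod_mul_distrib]
      congr 1
      apply Finset.prod_congr rfl
      intro m _
      simp only [hH_def]
      ring
    calc ‖f l * ∏ m, ((l m).choose (k m) : ℂ) * c m ^ (l m - k m) * ((1 - ‖c m‖ : ℝ) : ℂ) ^ k m‖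
        = ‖f l‖ * ∏ m, ‖((l m).choose (k m) : ℂ) * c m ^ (l m - k m) *
            ((1 - ‖c m‖ : ℝ) : ℂ) ^ k m‖ := by rw [norm_mul, norm_prod]
      _ = ‖f l‖ * ∏ m, ((((l m).choose (k m)):ℝ) * ‖c m‖^(l m - k m) * (t m)^(k m)) := by
          rw [Finset.prod_congr rfl (fun m _ => hz m)]
      _ ≤ (A * ∏ m, (((l m):ℝ)+1)^(n m)) *
            ∏ m, ((((l m).choose (k m)):ℝ) * ‖c m‖^(l m - k m) * (t m)^(k m)) := by
          apply mul_le_mul_of_nonneg_right (hf l)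
          apply Finset.prod_nonneg
          intro m _
          have := (ht m).le
          positivity
      _ = A * ∏ m, H m (l m) := hsplitH.symm
  -- ENNReal computation
  set C : ℝ := A * ∏ m, B m with hC_def
  have hC0 : 0 ≤ C := mul_nonneg hA0 (Finset.prod_nonneg fun m _ => hB0 m)
  have hkey : ∑' l : Fin g →₀ ℕ, ENNReal.ofReal (A * ∏ m, H m (l m)) ≤ ENNReal.ofReal C := by
    have e1 : ∀ l : Fin g →₀ ℕ, ENNReal.ofReal (A * ∏ m, H m (l m)) =
        ENNReal.ofReal A * ∏ m, ENNReal.ofReal (H m (l m)) := by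
      intro l
      rw [ENNReal.ofReal_mul hA0, my_ofReal_prod _ _ (fun m _ => hHnonneg m (l m))]
    simp only [e1]
    rw [ENNReal.tsum_mul_left]
    have e2 : ∑' l : Fin g →₀ ℕ, ∏ m, ENNReal.ofReal (H m (l m)) =
        ∑' x : Fin g → ℕ, ∏ m, ENNReal.ofReal (H m (x m)) :=
      Finsupp.equivFunOnFinite.tsum_eq (fun x : Fin g → ℕ => ∏ m, ENNReal.ofReal (H m (x m)))
    rw [e2, my_tsum_pi g (fun m j => ENNReal.ofReal (H m j))]
    have e3 : ∀ m : Fin g, ∑' j, ENNReal.ofReal (H m j) ≤ ENNReal.ofReal (B m) := by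
      intro m
      rw [← ENNReal.ofReal_tsum_of_nonneg (hHnonneg m) (hHsummable m)]
      exact ENNReal.ofReal_le_ofReal (hHtsum m)
    calc ENNReal.ofReal A * ∏ m, ∑' j, ENNReal.ofReal (H m j)
        ≤ ENNReal.ofReal A * ∏ m, ENNReal.ofReal (B m) := by
          apply mul_le_mul_right
          exact Finset.prod_le_prod' fun m _ => e3 m
      _ = ENNReal.ofReal C := by
          rw [hC_def, ENNReal.ofReal_mul hA0, my_ofReal_prod _ _ (fun m _ => hB0 m)]
  -- from ENNReal bound to summability and real bound
  set F : (Fin g →₀ ℕ) → ℂ := fun l => f l *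
    ∏ m, ((l m).choose (k m) : ℂ) * c m ^ (l m - k m) * ((1 - ‖c m‖ : ℝ) : ℂ) ^ k m with hF_def
  have hFbound : ∑' l, (‖F l‖₊ : ℝ≥0∞) ≤ ENNReal.ofReal C := by
    refine le_trans (ENNReal.tsum_le_tsum fun l => ?_) hkey
    rw [← enorm_eq_nnnorm, ← ofReal_norm]
    exact ENNReal.ofReal_le_ofReal (hnormF l)
  have hne : (∑' l, (‖F l‖₊ : ℝ≥0∞)) ≠ ⊤ := ne_top_of_le_ne_top ENNReal.ofReal_ne_top hFbound
  have hsummable_nn : Summable (fun l => ‖F l‖₊) := ENNReal.tsum_coe_ne_top_iff_summable.1 hne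
  have hsummable_norm : Summable (fun l => ‖F l‖) := by
    have := NNReal.summable_coe.2 hsummable_nn
    simpa using this
  have hnorm_tsum : ‖∑' l, F l‖ ≤ ∑' l, ‖F l‖ := norm_tsum_le_tsum_norm hsummable_norm
  have htsum_le : ∑' l, ‖F l‖ ≤ C := by
    have h1 : ENNReal.ofReal (∑' l, ‖F l‖) = ∑' l, ENNReal.ofReal ‖F l‖ :=
      ENNReal.ofReal_tsum_of_nonneg (fun l => norm_nonneg _) hsummable_norm
    have h2 : ENNReal.ofReal (∑' l, ‖F l‖) ≤ ENNReal.ofReal C := by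
      rw [h1]
      refine le_trans (le_of_eq ?_) hFbound
      congr 1
      ext l
      rw [← enorm_eq_nnnorm, ← ofReal_norm]
    exact (ENNReal.ofReal_le_ofReal_iff hC0).1 h2
  -- finally, C is at most the stated bound
  have hfinal : C ≤
      (((∏ m, (n m).factorial : ℕ) : ℝ) * A * Real.exp ((g : ℝ) + ∑ m, (n m : ℝ)) *
        2 ^ (g + ∑ m, n m) / ∏ m, (1 - ‖c m‖) ^ (n m + 2)) * ∏ m, ((k m : ℝ) + 1) ^ (n m + 1) := by
    set Q : Fin g → ℝ := fun m =>
      ((n m).factorial : ℝ) * ((k m:ℝ)+1)^(n m + 1) *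
        (Real.exp (1 + (n m:ℝ)) * (2:ℝ)^(1 + n m)) / (t m)^(n m + 2) with hQ_def
    have hBQ : ∀ m, B m ≤ Q m := by
      intro m
      rw [hB_def, hQ_def]
      simp only
      have hk1 : (1:ℝ) ≤ (k m:ℝ) + 1 := by linarith [show (0:ℝ) ≤ (k m:ℝ) from Nat.cast_nonneg _]
      have hfac : (0:ℝ) ≤ ((n m).factorial : ℝ) := Nat.cast_nonneg _
      have hnum1 : ((n m).factorial : ℝ) * ((k m:ℝ)+1)^(n m) ≤
          ((n m).factorial : ℝ) * ((k m:ℝ)+1)^(n m + 1) :=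
        mul_le_mul_of_nonneg_left (pow_le_pow_right₀ hk1 (by omega)) hfac
      have hge1 : (1:ℝ) ≤ Real.exp (1 + (n m:ℝ)) * (2:ℝ)^(1 + n m) := by
        have e1 : (1:ℝ) ≤ Real.exp (1 + (n m:ℝ)) := Real.one_le_exp (by positivity)
        have e2 : (1:ℝ) ≤ (2:ℝ)^(1 + n m) := one_le_pow₀ (by norm_num)
        nlinarith
      have hnum : ((n m).factorial : ℝ) * ((k m:ℝ)+1)^(n m) ≤
          ((n m).factorial : ℝ) * ((k m:ℝ)+1)^(n m + 1) *
            (Real.exp (1 + (n m:ℝ)) * (2:ℝ)^(1 + n m)) := by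
        refine hnum1.trans ?_
        refine le_mul_of_one_le_right ?_ hge1
        positivity
      refine div_le_div₀ ?_ hnum (pow_pos (ht m) _) ?_
      · positivity
      · exact pow_le_pow_of_le_one (ht m).le (ht1 m) (by omega)
    have hCQ : C ≤ A * ∏ m, Q m := by
      rw [hC_def]
      apply mul_le_mul_of_nonneg_left _ hA0
      exact Finset.prod_le_prod (fun m _ => hB0 m) (fun m _ => hBQ m)
    refine hCQ.trans (le_of_eq ?_)
    have hexp : Real.exp ((g : ℝ) + ∑ m, (n m : ℝ)) = ∏ m, Real.exp (1 + (n m:ℝ)) := by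
      rw [← Real.exp_sum]
      congr 1
      rw [Finset.sum_add_distrib, Finset.sum_const, Finset.card_univ, Fintype.card_fin,
        nsmul_eq_mul, mul_one]
    have h2pow : (2:ℝ) ^ (g + ∑ m, n m) = ∏ m, (2:ℝ)^(1 + n m) := by
      rw [Finset.prod_pow_eq_pow_sum]
      congr 1
      rw [Finset.sum_add_distrib, Finset.sum_const, Finset.card_univ, Fintype.card_fin,
        smul_eq_mul, mul_one]
    have hfacts : ((∏ m, (n m).factorial : ℕ) : ℝ) = ∏ m, ((n m).factorial : ℝ) :=
      Nat.cast_prod _ _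
    rw [hexp, h2pow, hfacts]
    have hQprod : ∏ m, Q m =
        (∏ m, (((n m).factorial : ℝ) * ((k m:ℝ)+1)^(n m + 1) *
          (Real.exp (1 + (n m:ℝ)) * (2:ℝ)^(1 + n m)))) / ∏ m, (t m)^(n m + 2) :=
      Finset.prod_div_distrib _ _
    rw [hQprod, Finset.prod_mul_distrib, Finset.prod_mul_distrib, Finset.prod_mul_distrib]
    have htprod : ∏ m, (1 - ‖c m‖) ^ (n m + 2) = ∏ m, (t m)^(n m + 2) := by
      apply Finset.prod_congr rfl
      intro m _
      rw [ht_def]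
    rw [htprod]
    ring
  calc ‖∑' l, F l‖ ≤ ∑' l, ‖F l‖ := hnorm_tsum
    _ ≤ C := htsum_le
    _ ≤ _ := hfinal
end

section
/- (Analytic continuation to the son disk.) There is an effective positive constant c₁₂ such that: if f(z) is a power series of one variable with order of growth (A, n) (A ≥ 1, n ≥ 1), D_c ⊂ D(0,1) is the balanced disk of center c (radius r = (1−|c|)/2), |f| ≤ ε on D_c with 0 < ε < 1, and −log ε ≥ c₁₂ (log A + n² |log r|), then |f| ≤ ε^{1/20} on the son disk D_{c'}. -/
open Metric Real Filter FormalMultilinearSeries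

lemma key_pow_le (k n : ℕ) : ((k:ℝ)+1)^n ≤ (n.factorial : ℝ) * ((k+n).choose n) := by
  have h1 : (k+1) ^ n ≤ (k+1).ascFactorial n := Nat.pow_succ_le_ascFactorial (k+1) n
  have h2 : (k+1).ascFactorial n = n.factorial * ((k+n).choose n) :=
    Nat.ascFactorial_eq_factorial_mul_choose k n
  have := h2 ▸ h1
  calc ((k:ℝ)+1)^n = (((k+1)^n : ℕ) : ℝ) := by push_cast; ring
    _ ≤ ((n.factorial * ((k+n).choose n) : ℕ) : ℝ) := by exact_mod_cast this
    _ = (n.factorial : ℝ) * ((k+n).choose n) := by push_cast; ring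

lemma aux_summable {A : ℝ} (n : ℕ) {t : ℝ} (ht0 : 0 ≤ t) (ht : t < 1) :
    Summable (fun k : ℕ => A * ((k:ℝ)+1)^n * t ^ k) := by
  have h : Summable (fun k : ℕ => ((k+n).choose n : ℝ) * t ^ k) :=
    summable_choose_mul_geometric_of_norm_lt_one (R := ℝ) n
      (r := t) (by rwa [Real.norm_eq_abs, abs_of_nonneg ht0])
  have h2 := (h.mul_left (|A| * n.factorial))
  apply Summable.of_norm_bounded h2
  intro k
  rw [Real.norm_eq_abs, abs_mul, abs_mul, abs_of_nonneg (by positivity : (0:ℝ) ≤ ((k:ℝ)+1)^n),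
    abs_of_nonneg (pow_nonneg ht0 k)]
  have := key_pow_le k n
  calc |A| * ((k:ℝ)+1)^n * t^k ≤ |A| * ((n.factorial : ℝ) * ((k+n).choose n)) * t^k := by
        gcongr
    _ = |A| * (n.factorial : ℝ) * (((k+n).choose n : ℝ) * t^k) := by ring

lemma summable_coeff {f : ℕ → ℂ} {A : ℝ} {n : ℕ}
    (hf : ∀ k, ‖f k‖ ≤ A * ((k : ℝ) + 1) ^ n) {z : ℂ} (hz : ‖z‖ < 1) :
    Summable (fun k : ℕ => f k * z ^ k) := by
  apply Summable.of_norm_bounded ((aux_summable n (norm_nonneg z) hz))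
  intro k
  rw [norm_mul, norm_pow]
  exact mul_le_mul_of_nonneg_right (hf k) (pow_nonneg (norm_nonneg z) k)

lemma F_bound {f : ℕ → ℂ} {A : ℝ} {n : ℕ} (hA : 0 ≤ A)
    (hf : ∀ k, ‖f k‖ ≤ A * ((k : ℝ) + 1) ^ n) {t : ℝ} (ht : t < 1) {z : ℂ} (hz : ‖z‖ ≤ t) :
    ‖∑' k : ℕ, f k * z ^ k‖ ≤ A * n.factorial * (1/(1-t))^(n+1) := by
  have ht0 : (0:ℝ) ≤ t := (norm_nonneg z).trans hz
  have hz1 : ‖z‖ < 1 := lt_of_le_of_lt hz ht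
  have hgeom : Summable (fun k : ℕ => ((k+n).choose n : ℝ) * t ^ k) :=
    summable_choose_mul_geometric_of_norm_lt_one (R := ℝ) n
      (by rwa [Real.norm_eq_abs, abs_of_nonneg ht0])
  have key : ∀ k : ℕ, ‖f k * z ^ k‖ ≤ A * n.factorial * (((k+n).choose n : ℝ) * t^k) := by
    intro k
    rw [norm_mul, norm_pow]
    calc ‖f k‖ * ‖z‖^k ≤ (A * ((k:ℝ)+1)^n) * t^k :=
          mul_le_mul (hf k) (pow_le_pow_left₀ (norm_nonneg z) hz k) (by positivity)
            ((norm_nonneg _).trans (hf k))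
      _ ≤ (A * ((n.factorial : ℝ) * ((k+n).choose n))) * t^k := by
          have := key_pow_le k n
          nlinarith [pow_nonneg ht0 k, mul_nonneg hA (pow_nonneg ht0 k)]
      _ = A * n.factorial * (((k+n).choose n : ℝ) * t^k) := by ring
  have hsumm : Summable (fun k : ℕ => ‖f k * z ^ k‖) :=
    Summable.of_nonneg_of_le (fun k => norm_nonneg _) key (hgeom.mul_left (A * n.factorial))
  calc ‖∑' k : ℕ, f k * z ^ k‖ ≤ ∑' k : ℕ, ‖f k * z ^ k‖ := norm_tsum_le_tsum_norm hsumm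
    _ ≤ ∑' k : ℕ, A * n.factorial * (((k+n).choose n : ℝ) * t^k) :=
        Summable.tsum_le_tsum key hsumm (hgeom.mul_left _)
    _ = A * n.factorial * ∑' k : ℕ, (((k+n).choose n : ℝ) * t^k) := tsum_mul_left
    _ = A * n.factorial * (1/(1-t))^(n+1) := by
        rw [tsum_choose_mul_geometric_of_norm_lt_one n
          (by rwa [Real.norm_eq_abs, abs_of_nonneg ht0] : ‖t‖ < 1)]
        rw [one_div, ← inv_pow, one_div]

lemma hasFPSOB {f : ℕ → ℂ} {A : ℝ} {n : ℕ} (hf : ∀ k, ‖f k‖ ≤ A * ((k : ℝ) + 1) ^ n) :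
    HasFPowerSeriesOnBall (fun z : ℂ => ∑' k : ℕ, f k * z ^ k) (ofScalars ℂ f) 0 1 := by
  constructor
  · apply ENNReal.le_of_forall_nnreal_lt
    intro t ht
    apply FormalMultilinearSeries.le_radius_of_summable
    have ht1 : (t : ℝ) < 1 := by exact_mod_cast ht
    simp only [ofScalars_norm]
    apply Summable.of_nonneg_of_le (fun k => by positivity)
      (fun k => ?_) (aux_summable (A := A) n t.coe_nonneg ht1)
    exact mul_le_mul_of_nonneg_right (hf k) (pow_nonneg t.coe_nonneg k)
  · exact one_pos
  · intro y hy
    have hy1 : ‖y‖ < 1 := by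
      simpa [edist_eq_enorm_sub, enorm_eq_nnnorm, ← ENNReal.coe_one, ENNReal.coe_lt_coe,
        ← NNReal.coe_lt_coe, coe_nnnorm] using hy
    have hs := (summable_coeff hf hy1).hasSum
    simp only [zero_add]
    have hfun : (fun k => ofScalars ℂ f k fun _ => y) = fun k => f k * y ^ k := by
      funext k
      rw [ofScalars_apply_eq]
      simp [smul_eq_mul]
    rw [hfun]
    exact hs

lemma cauchy_coeff_bound {F : ℂ → ℂ} {c : ℂ} {R C : ℝ} (hR : 0 < R)
    (hcont : ContinuousOn F (sphere c R)) (hbound : ∀ w ∈ sphere c R, ‖F w‖ ≤ C) (k : ℕ) :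
    ‖cauchyPowerSeries F c R k‖ ≤ C * (R⁻¹)^k := by
  have hC : 0 ≤ C := (norm_nonneg _).trans (hbound _ (circleMap_mem_sphere c hR.le 0))
  refine (norm_cauchyPowerSeries_le F c R k).trans ?_
  rw [abs_of_pos hR]
  have hint : IntervalIntegrable (fun θ : ℝ => ‖F (circleMap c R θ)‖)
      MeasureTheory.volume 0 (2*π) := by
    apply ContinuousOn.intervalIntegrable
    apply ContinuousOn.norm
    apply hcont.comp (continuous_circleMap c R).continuousOn
    intro θ _
    exact circleMap_mem_sphere c hR.le θ
  have h1 : ∫ θ : ℝ in (0)..2*π, ‖F (circleMap c R θ)‖ ≤ 2*π*C := by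
    calc ∫ θ : ℝ in (0)..2*π, ‖F (circleMap c R θ)‖ ≤ ∫ _ : ℝ in (0)..2*π, C := by
          apply intervalIntegral.integral_mono_on Real.two_pi_pos.le hint
            intervalIntegrable_const
          intro θ _
          exact hbound _ (circleMap_mem_sphere c hR.le θ)
      _ = 2*π*C := by simp [mul_comm]
  have h2 : (2 * π)⁻¹ * ∫ θ : ℝ in (0)..2*π, ‖F (circleMap c R θ)‖ ≤ C := by
    rw [inv_mul_le_iff₀ Real.two_pi_pos]
    linarith [h1]
  exact mul_le_mul_of_nonneg_right h2 (by positivity)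

set_option maxHeartbeats 1000000 in
theorem stmt13 :
    ∃ c₁₂ : ℝ, 0 < c₁₂ ∧
      ∀ (f : ℕ → ℂ) (A : ℝ) (n : ℕ), 1 ≤ A → 1 ≤ n →
        (∀ k, ‖f k‖ ≤ A * ((k : ℝ) + 1) ^ n) →
        ∀ (c : ℂ) (ε : ℝ), ‖c‖ < 1 → 0 < ε → ε < 1 →
          (∀ z : ℂ, ‖z - c‖ < (1 - ‖c‖) / 2 → ‖∑' k : ℕ, f k * z ^ k‖ ≤ ε) →
          c₁₂ * (Real.log A + (n : ℝ) ^ 2 * |Real.log ((1 - ‖c‖) / 2)|) ≤ -Real.log ε →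
          ∀ z : ℂ,
            ‖z - (if 1 / 5 < ‖c‖ then (((‖c‖ - (1 - ‖c‖) / 4) / ‖c‖ : ℝ) : ℂ) * c else 0)‖ <
              (if 1 / 5 < ‖c‖ then 5 / 4 * ((1 - ‖c‖) / 2) else 1 / 2) →
            ‖∑' k : ℕ, f k * z ^ k‖ ≤ ε ^ ((1 : ℝ) / 20) := by
  refine ⟨4000, by norm_num, ?_⟩
  intro f A n hA hn hf c ε hc hε0 hε1 hsmall hlog z hz
  obtain ⟨r, hrdef⟩ : ∃ t : ℝ, (1 - ‖c‖)/2 = t := ⟨_, rfl⟩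
  rw [hrdef] at hsmall hlog hz
  have hc0 : (0:ℝ) ≤ ‖c‖ := norm_nonneg c
  have hr0 : 0 < r := by rw [← hrdef]; linarith
  have hr2 : r ≤ 1/2 := by rw [← hrdef]; linarith
  have hcr : ‖c‖ = 1 - 2*r := by rw [← hrdef]; ring
  -- reduce son-ball membership
  have hzc : ‖z - c‖ ≤ 7/4 * r := by
    by_cases h5 : 1/5 < ‖c‖
    · rw [if_pos h5, if_pos h5] at hz
      have hcne : ‖c‖ ≠ 0 := by positivity
      have hkey : ‖(((‖c‖ - (1 - ‖c‖) / 4) / ‖c‖ : ℝ) : ℂ) * c - c‖ = r/2 := by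
        have e1 : (((‖c‖ - (1 - ‖c‖) / 4) / ‖c‖ : ℝ) : ℂ) * c - c
            = (((‖c‖ - (1 - ‖c‖) / 4) / ‖c‖ - 1 : ℝ) : ℂ) * c := by push_cast; ring
        rw [e1, norm_mul, Complex.norm_real, Real.norm_eq_abs]
        rw [div_sub_one hcne, abs_div, abs_of_pos (by linarith : (0:ℝ) < ‖c‖),
          div_mul_cancel₀ _ hcne]
        rw [abs_of_nonpos (by linarith : ‖c‖ - (1 - ‖c‖) / 4 - ‖c‖ ≤ 0)]
        rw [hcr]; ring_nf
      calc ‖z - c‖ ≤ ‖z - (((‖c‖ - (1 - ‖c‖) / 4) / ‖c‖ : ℝ) : ℂ) * c‖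
            + ‖(((‖c‖ - (1 - ‖c‖) / 4) / ‖c‖ : ℝ) : ℂ) * c - c‖ := by
            simpa [dist_eq_norm] using dist_triangle z ((((‖c‖ - (1 - ‖c‖) / 4) / ‖c‖ : ℝ) : ℂ) * c) c
        _ ≤ 5/4 * r + r/2 := by rw [hkey]; linarith [hz]
        _ = 7/4 * r := by ring
    · rw [if_neg h5, if_neg h5] at hz
      push_neg at h5
      have h1 : ‖z - c‖ ≤ ‖z - 0‖ + ‖c‖ := by
        simpa [dist_eq_norm] using dist_triangle z 0 c
      have : (2:ℝ)/5 ≤ r := by rw [← hrdef]; linarith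
      linarith
  clear hz
  -- power series setup
  have hp := hasFPSOB hf
  have hball : Metric.eball (0:ℂ) 1 = Metric.ball 0 1 := by
    rw [← ENNReal.ofReal_one, Metric.eball_ofReal]
  have hsub : closedBall c (15/8*r) ⊆ Metric.eball (0:ℂ) 1 := by
    rw [hball]
    intro w hw
    rw [mem_closedBall, dist_eq_norm] at hw
    rw [mem_ball, dist_zero_right]
    have : ‖w‖ ≤ ‖w - c‖ + ‖c‖ := by simpa [dist_eq_norm] using dist_triangle w c 0
    rw [hcr] at this
    linarith
  have hdiff : DifferentiableOn ℂ (fun z : ℂ => ∑' k : ℕ, f k * z ^ k) (closedBall c (15/8*r)) :=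
    hp.differentiableOn.mono hsub
  have hco : ((15/8*r).toNNReal : ℝ) = 15/8*r := Real.coe_toNNReal _ (by positivity)
  have hco' : ((7/8*r).toNNReal : ℝ) = 7/8*r := Real.coe_toNNReal _ (by positivity)
  have hdiff2 : DifferentiableOn ℂ (fun z : ℂ => ∑' k : ℕ, f k * z ^ k)
      (closedBall c ((15/8*r).toNNReal : ℝ)) := by rw [hco]; exact hdiff
  have hdiff3 : DifferentiableOn ℂ (fun z : ℂ => ∑' k : ℕ, f k * z ^ k)
      (closedBall c ((7/8*r).toNNReal : ℝ)) := by
    rw [hco']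
    exact hdiff.mono (closedBall_subset_closedBall (by linarith))
  have hq0 := hdiff2.hasFPowerSeriesOnBall (R := (15/8*r).toNNReal)
      (Real.toNNReal_pos.mpr (by positivity))
  rw [hco] at hq0
  have hq1 := hdiff3.hasFPowerSeriesOnBall (R := (7/8*r).toNNReal)
      (Real.toNNReal_pos.mpr (by positivity))
  rw [hco'] at hq1
  have heq : cauchyPowerSeries (fun z : ℂ => ∑' k : ℕ, f k * z ^ k) c (7/8*r)
      = cauchyPowerSeries (fun z : ℂ => ∑' k : ℕ, f k * z ^ k) c (15/8*r) :=
    hq1.hasFPowerSeriesAt.eq_formalMultilinearSeries hq0.hasFPowerSeriesAt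
  obtain ⟨q, hqdef⟩ : ∃ Q, cauchyPowerSeries (fun z : ℂ => ∑' k : ℕ, f k * z ^ k) c (15/8*r) = Q :=
    ⟨_, rfl⟩
  rw [hqdef] at hq0 heq
  have hA0 : (0:ℝ) < A := by linarith
  obtain ⟨M, hM⟩ : ∃ t : ℝ, A * n.factorial * (8/r)^(n+1) = t := ⟨_, rfl⟩
  have hMpos : 0 < M := by rw [← hM]; positivity
  -- coefficient bounds
  have hB1 : ∀ k, ‖q k‖ ≤ ε * ((7/8*r)⁻¹)^k := by
    intro k
    rw [← heq]
    apply cauchy_coeff_bound (by positivity)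
    · apply hdiff.continuousOn.mono
      exact sphere_subset_closedBall.trans (closedBall_subset_closedBall (by linarith))
    · intro w hw
      rw [mem_sphere, dist_eq_norm] at hw
      exact hsmall w (by rw [hw]; linarith)
  have hB2 : ∀ k, ‖q k‖ ≤ M * ((15/8*r)⁻¹)^k := by
    intro k
    rw [← hqdef]
    apply cauchy_coeff_bound (by positivity)
    · apply hdiff.continuousOn.mono
      exact sphere_subset_closedBall
    · intro w hw
      rw [mem_sphere, dist_eq_norm] at hw
      have hwn : ‖w‖ ≤ 1 - r/8 := by
        have : ‖w‖ ≤ ‖w - c‖ + ‖c‖ := by simpa [dist_eq_norm] using dist_triangle w c 0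
        rw [hw, hcr] at this
        linarith
      have h := F_bound hA0.le hf (t := 1 - r/8) (by linarith) hwn
      rw [← hM]
      convert h using 2
      rw [show (1:ℝ) - (1 - r/8) = r/8 by ring, one_div, inv_div]
  -- summation at z
  obtain ⟨y, hy⟩ : ∃ w : ℂ, z - c = w := ⟨_, rfl⟩
  rw [hy] at hzc
  have hymem : y ∈ Metric.eball (0:ℂ) ((15/8*r).toNNReal : ENNReal) := by
    rw [Metric.mem_eball, edist_dist, dist_zero_right, ← ENNReal.ofReal_coe_nnreal, hco,
      ENNReal.ofReal_lt_ofReal_iff (by positivity)]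
    calc ‖y‖ ≤ 7/4*r := hzc
      _ < 15/8*r := by linarith
  have hsum := hq0.hasSum hymem
  have hcz : c + y = z := by rw [← hy]; ring
  rw [hcz] at hsum
  have hbk : ∀ k, ‖q k fun _ => y‖ ≤ ‖q k‖ * ‖y‖^k := by
    intro k
    calc ‖q k fun _ => y‖ ≤ ‖q k‖ * ∏ _i : Fin k, ‖y‖ := (q k).le_opNorm _
      _ = ‖q k‖ * ‖y‖^k := by simp
  have hratio2 : ((15/8*r)⁻¹ * (7/4*r)) = 14/15 := by
    field_simp
    ring
  have hratio1 : ((7/8*r)⁻¹ * (7/4*r)) = 2 := by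
    field_simp
    ring
  have h_b2 : ∀ k, ‖q k‖ * ‖y‖^k ≤ M * (14/15)^k := by
    intro k
    calc ‖q k‖ * ‖y‖^k ≤ (M * ((15/8*r)⁻¹)^k) * (7/4*r)^k :=
          mul_le_mul (hB2 k) (pow_le_pow_left₀ (norm_nonneg y) hzc k)
            (by positivity) (by positivity)
      _ = M * ((15/8*r)⁻¹ * (7/4*r))^k := by rw [mul_assoc, ← mul_pow]
      _ = M * (14/15)^k := by rw [hratio2]
  have h_b1 : ∀ k, ‖q k‖ * ‖y‖^k ≤ ε * 2^k := by
    intro k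
    calc ‖q k‖ * ‖y‖^k ≤ (ε * ((7/8*r)⁻¹)^k) * (7/4*r)^k :=
          mul_le_mul (hB1 k) (pow_le_pow_left₀ (norm_nonneg y) hzc k)
            (by positivity) (by positivity)
      _ = ε * ((7/8*r)⁻¹ * (7/4*r))^k := by rw [mul_assoc, ← mul_pow]
      _ = ε * 2^k := by rw [hratio1]
  have hgsum : Summable (fun k : ℕ => M * (14/15:ℝ)^k) :=
    (summable_geometric_of_lt_one (by norm_num) (by norm_num)).mul_left M
  have hbsum : Summable (fun k : ℕ => ‖q k fun _ => y‖) :=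
    Summable.of_nonneg_of_le (fun k => norm_nonneg _)
      (fun k => (hbk k).trans (h_b2 k)) hgsum
  have hFz : ‖∑' k : ℕ, f k * z ^ k‖ ≤ ∑' k : ℕ, ‖q k fun _ => y‖ := by
    rw [← hsum.tsum_eq]
    exact norm_tsum_le_tsum_norm hbsum
  -- split
  obtain ⟨L, hLdef⟩ : ∃ t : ℝ, -Real.log ε = t := ⟨_, rfl⟩
  rw [hLdef] at hlog
  have hL0 : 0 < L := by rw [← hLdef]; linarith [Real.log_neg hε0 hε1]
  obtain ⟨u, hu⟩ : ∃ m : ℕ, ⌈L⌉₊ = m := ⟨_, rfl⟩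
  have hsplit := (Summable.sum_add_tsum_nat_add u hbsum).symm
  have hhead : ∑ k ∈ Finset.range u, ‖q k fun _ => y‖ ≤ ε * 2^u := by
    calc ∑ k ∈ Finset.range u, ‖q k fun _ => y‖
        ≤ ∑ k ∈ Finset.range u, ε * 2^k :=
          Finset.sum_le_sum (fun k _ => (hbk k).trans (h_b1 k))
      _ = ε * ∑ k ∈ Finset.range u, (2:ℝ)^k := by rw [Finset.mul_sum]
      _ = ε * ((2^u - 1)/(2-1)) := by rw [geom_sum_eq (by norm_num) u]
      _ ≤ ε * 2^u := by
          have h : ((2:ℝ)^u - 1)/(2-1) ≤ 2^u := by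
            rw [show ((2:ℝ)-1) = 1 by norm_num, div_one]; linarith
          exact mul_le_mul_of_nonneg_left h hε0.le
  have htail : ∑' k : ℕ, ‖q (k + u) fun _ => y‖ ≤ M * (14/15)^u * 15 := by
    have hshift : Summable (fun k : ℕ => M * (14/15:ℝ)^(k+u)) := by
      apply Summable.congr ((summable_geometric_of_lt_one (r := (14/15:ℝ))
        (by norm_num) (by norm_num)).mul_left (M * (14/15:ℝ)^u))
      intro k
      rw [pow_add]; ring
    have h1 : ∑' k : ℕ, ‖q (k + u) fun _ => y‖ ≤ ∑' k : ℕ, M * (14/15:ℝ)^(k+u) :=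
      Summable.tsum_le_tsum (fun k => (hbk (k+u)).trans (h_b2 (k+u)))
        ((summable_nat_add_iff u).2 hbsum) hshift
    have h2 : ∑' k : ℕ, M * (14/15:ℝ)^(k+u) = (M * (14/15:ℝ)^u) * ∑' k : ℕ, (14/15:ℝ)^k := by
      rw [← tsum_mul_left]
      exact tsum_congr (fun k => by rw [pow_add]; ring)
    have h3 : ∑' k : ℕ, (14/15:ℝ)^k = 15 := by
      rw [tsum_geometric_of_lt_one (by norm_num) (by norm_num)]; norm_num
    rw [h2, h3] at h1
    linarith only [h1]
  -- numeric facts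
  obtain ⟨P, hPdef⟩ : ∃ t : ℝ, |Real.log r| = t := ⟨_, rfl⟩
  rw [hPdef] at hlog
  have hlogr_neg : Real.log r < 0 := Real.log_neg hr0 (by linarith only [hr2])
  have habs : P = -Real.log r := by rw [← hPdef]; exact abs_of_neg hlogr_neg
  have hlog2a : (0.6931:ℝ) < Real.log 2 := by
    have := Real.log_two_gt_d9; linarith only [this]
  have hlog2b : Real.log 2 < 0.6932 := by
    have := Real.log_two_lt_d9; linarith only [this]
  have hPge : Real.log 2 ≤ P := by
    rw [habs]
    have h1 : Real.log r ≤ Real.log (1/2) := Real.log_le_log hr0 hr2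
    have h2 : Real.log (1/2 : ℝ) = -Real.log 2 := by
      rw [one_div, Real.log_inv]
    linarith only [h1, h2]
  have hP69 : (0.6931:ℝ) ≤ P := by linarith only [hPge, hlog2a]
  have hAlog : 0 ≤ Real.log A := Real.log_nonneg hA
  have hN : (1:ℝ) ≤ (n:ℝ) := by exact_mod_cast hn
  have hN2 : (1:ℝ) ≤ (n:ℝ)^2 := one_le_pow₀ hN
  have hu1 : L ≤ (u:ℝ) := by rw [← hu]; exact Nat.le_ceil L
  have hu2 : (u:ℝ) ≤ L + 1 := by rw [← hu]; exact (Nat.ceil_lt_add_one hL0.le).le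
  have hu0 : (0:ℝ) ≤ (u:ℝ) := Nat.cast_nonneg u
  have hS : (0.6931:ℝ) ≤ (n:ℝ)^2 * P := by
    have t := mul_le_mul_of_nonneg_left hP69 (by positivity : (0:ℝ) ≤ (n:ℝ)^2)
    nlinarith only [t, hN2, hP69]
  have hLbig : (2772:ℝ) ≤ L := by linarith only [hlog, hAlog, hS]
  have hεpow : (0:ℝ) < ε ^ ((1:ℝ)/20) := Real.rpow_pos_of_pos hε0 _
  have hlogε : Real.log ε = -L := by rw [← hLdef]; ring
  -- goal 1
  have goal1 : ε * 2^u ≤ ε ^ ((1:ℝ)/20) / 2 := by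
    rw [← Real.log_le_log_iff (by positivity) (by positivity)]
    rw [Real.log_mul (ne_of_gt hε0) (by positivity), Real.log_pow,
      Real.log_div (ne_of_gt hεpow) (by norm_num), Real.log_rpow hε0, hlogε]
    have hmul : (u:ℝ) * Real.log 2 ≤ (L+1) * Real.log 2 :=
      mul_le_mul_of_nonneg_right hu2 (by linarith only [hlog2a])
    have hmul2 : L * Real.log 2 ≤ L * 0.6932 :=
      mul_le_mul_of_nonneg_left hlog2b.le (by linarith only [hLbig])
    linarith only [hmul, hmul2, hlog2b, hLbig, hlog2a]
  -- goal 2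
  have goal2 : M * (14/15:ℝ)^u * 15 ≤ ε ^ ((1:ℝ)/20) / 2 := by
    rw [← Real.log_le_log_iff (by positivity) (by positivity)]
    rw [Real.log_mul (by positivity) (by norm_num),
      Real.log_mul (ne_of_gt hMpos) (by positivity), Real.log_pow,
      Real.log_div (ne_of_gt hεpow) (by norm_num), Real.log_rpow hε0, hlogε]
    have hlogM : Real.log M ≤ Real.log A + (n:ℝ)*(n:ℝ)
        + ((n:ℝ)+1) * (3*Real.log 2 + P) := by
      rw [← hM, Real.log_mul (by positivity) (by positivity),
        Real.log_mul (ne_of_gt hA0) (by positivity), Real.log_pow]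
      have h8r : Real.log (8/r) = 3*Real.log 2 + P := by
        rw [Real.log_div (by norm_num) (ne_of_gt hr0), habs]
        have h8 : Real.log (8:ℝ) = 3*Real.log 2 := by
          rw [show (8:ℝ) = 2^3 by norm_num, Real.log_pow]; push_cast; ring
        linarith only [h8]
      have hfact : Real.log (n.factorial : ℝ) ≤ (n:ℝ)*(n:ℝ) := by
        have h1 : (n.factorial : ℝ) ≤ (n:ℝ)^n := by exact_mod_cast Nat.factorial_le_pow n
        have h2 : Real.log (n.factorial : ℝ) ≤ Real.log ((n:ℝ)^n) :=
          Real.log_le_log (by exact_mod_cast n.factorial_pos) h1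
        rw [Real.log_pow] at h2
        have h3 : Real.log (n:ℝ) ≤ (n:ℝ) := by
          have := Real.log_le_sub_one_of_pos (show (0:ℝ) < (n:ℝ) by linarith only [hN])
          linarith only [this, hN]
        have h4 : (n:ℝ) * Real.log (n:ℝ) ≤ (n:ℝ)*(n:ℝ) :=
          mul_le_mul_of_nonneg_left h3 (by linarith only [hN])
        linarith only [h2, h4]
      rw [h8r]
      push_cast
      linarith only [hfact]
    have hN1 : (n:ℝ)+1 ≤ 2*(n:ℝ)^2 := by
      nlinarith only [hN, sq_nonneg ((n:ℝ)-1)]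
    have t1 : ((n:ℝ)+1)*(3*Real.log 2 + P) ≤ (2*(n:ℝ)^2)*(3*Real.log 2 + P) :=
      mul_le_mul_of_nonneg_right hN1 (by linarith only [hlog2a, hP69])
    have t3 : (n:ℝ)^2*Real.log 2 ≤ (n:ℝ)^2*P :=
      mul_le_mul_of_nonneg_left hPge (by positivity)
    have hE1 : ((n:ℝ)+1)*(3*Real.log 2 + P) ≤ 8*((n:ℝ)^2*P) := by
      nlinarith only [t1, t3]
    have hE2 : (n:ℝ)*(n:ℝ) ≤ 2*((n:ℝ)^2*P) := by
      have t4 := mul_nonneg (by linarith only [hP69] : (0:ℝ) ≤ 2*P-1) (sq_nonneg (n:ℝ))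
      nlinarith only [t4]
    have h1415 : Real.log (14/15 : ℝ) ≤ -(1/15) := by
      have := Real.log_le_sub_one_of_pos (show (0:ℝ) < 14/15 by norm_num)
      linarith only [this]
    have humul : (u:ℝ) * Real.log (14/15 : ℝ) ≤ -(L/15) := by
      have h1 : (u:ℝ) * Real.log (14/15:ℝ) ≤ (u:ℝ) * (-(1/15)) :=
        mul_le_mul_of_nonneg_left h1415 hu0
      linarith only [h1, hu1]
    have hlog15 : Real.log (15:ℝ) ≤ 14 := by
      have := Real.log_le_sub_one_of_pos (show (0:ℝ) < 15 by norm_num)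
      linarith only [this]
    linarith only [hlogM, hE1, hE2, humul, hlog15, hlog2b, hlog, hAlog, hS, hLbig, hlog2a]
  calc ‖∑' k : ℕ, f k * z ^ k‖ ≤ ∑' k : ℕ, ‖q k fun _ => y‖ := hFz
    _ = ∑ k ∈ Finset.range u, ‖q k fun _ => y‖ + ∑' k : ℕ, ‖q (k + u) fun _ => y‖ := hsplit
    _ ≤ ε * 2^u + M * (14/15)^u * 15 := add_le_add hhead htail
    _ ≤ ε ^ ((1:ℝ)/20) / 2 + ε ^ ((1:ℝ)/20) / 2 := add_le_add goal1 goal2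
    _ = ε ^ ((1:ℝ)/20) := by ring
end

section
/- (Location of a zero near a slope.) Let f = 1 + Σ_{k≥1} f_k z^k have radius of convergence R > 0. If ξ ∈ D(0, R) is a zero of f, then there exists a slope σ of the Newton polygon of f (i.e., a value of the derivative 𝒩′ at a point of differentiability) such that |log|ξ| − σ| ≤ log 3. -/
open Set Filter MeasureTheory Topology

/-- The Newton polygon of a power series `f` with `f 0 = 1` : the pointwise supremum of
all affine functions lying below the Newton cloud `{(k, -log ‖f k‖) : f k ≠ 0}`. -/
noncomputable def newtonPolygon (f : ℕ → ℂ) (x : ℝ) : ℝ :=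
  sSup {y : ℝ | ∃ a b : ℝ, y = a * x + b ∧
    ∀ k : ℕ, f k ≠ 0 → a * (k : ℝ) + b ≤ -Real.log ‖f k‖}


lemma exists_diff_pt {G : ℝ → ℝ} (hG : Monotone G) {α β : ℝ} (h : α < β) :
    ∃ x ∈ Set.Ioo α β, DifferentiableAt ℝ G x := by
  have h1 := hG.ae_differentiableAt
  rw [MeasureTheory.ae_iff] at h1
  by_contra hc
  push_neg at hc
  have hsub : Set.Ioo α β ⊆ {x | ¬ DifferentiableAt ℝ G x} := fun x hx => hc x hx
  have := MeasureTheory.measure_mono_null hsub h1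
  rw [Real.volume_Ioo] at this
  simp [ENNReal.ofReal_eq_zero] at this
  linarith

lemma deriv_ge {g : ℝ → ℝ} {σ x β m : ℝ} (hd : HasDerivAt g σ x) (hβ : x < β)
    (h : ∀ y ∈ Set.Ioo x β, m * (y - x) ≤ g y - g x) : m ≤ σ := by
  have ht : Tendsto (slope g x) (𝓝[>] x) (𝓝 σ) :=
    (hasDerivAt_iff_tendsto_slope.1 hd).mono_left
      (nhdsWithin_mono _ (fun y hy => ne_of_gt hy))
  refine ge_of_tendsto ht ?_
  filter_upwards [Ioo_mem_nhdsGT_of_mem ⟨le_refl x, hβ⟩] with y hy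
  have h1 := h y hy
  have h2 : 0 < y - x := by linarith [hy.1]
  rw [slope_def_field]
  rw [le_div_iff₀ h2]
  linarith

lemma deriv_le {g : ℝ → ℝ} {σ x β M : ℝ} (hd : HasDerivAt g σ x) (hβ : x < β)
    (h : ∀ y ∈ Set.Ioo x β, g y - g x ≤ M * (y - x)) : σ ≤ M := by
  have : -M ≤ -σ := deriv_ge hd.neg hβ (fun y hy => by have := h y hy; simp; linarith)
  linarith

lemma geom_partial (n : ℕ) : ∑ j ∈ Finset.range n, (1/3:ℝ)^(j+1) = 1/2 - (1/2)*(1/3)^n := by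
  induction n with
  | zero => simp
  | succ n ih => rw [Finset.sum_range_succ, ih]; ring

set_option maxHeartbeats 2000000 in
lemma core (f : ℕ → ℂ) (hf0 : f 0 = 1) (t L b₀ : ℝ) (hL : 0 < L)
    (i j : ℕ) (hij : i < j) (hfi : f i ≠ 0) (hfj : f j ≠ 0)
    (hline : ∀ k : ℕ, f k ≠ 0 → t * k + b₀ ≤ -Real.log ‖f k‖)
    (htouch : (t * i + b₀ = -Real.log ‖f i‖ ∧
        -Real.log ‖f j‖ - -Real.log ‖f i‖ < (t + L) * ((j:ℝ) - i)) ∨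
      (t * j + b₀ = -Real.log ‖f j‖ ∧
        (t - L) * ((j:ℝ) - i) < -Real.log ‖f j‖ - -Real.log ‖f i‖)) :
    ∃ σ x : ℝ, 0 ≤ x ∧ x ≤ (j : ℝ) ∧ HasDerivAt (newtonPolygon f) σ x ∧ |t - σ| ≤ L := by
  set c : ℕ → ℝ := fun k => -Real.log ‖f k‖ with hc
  set N := newtonPolygon f with hNdef
  set S : ℝ → Set ℝ := fun x => {y : ℝ | ∃ a b : ℝ, y = a * x + b ∧
    ∀ k : ℕ, f k ≠ 0 → a * (k : ℝ) + b ≤ c k} with hS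
  have hNS : ∀ x, N x = sSup (S x) := fun x => rfl
  have hf0' : f 0 ≠ 0 := by rw [hf0]; exact one_ne_zero
  have hc0 : c 0 = 0 := by simp [hc, hf0]
  have hmem : ∀ x, (t * x + b₀) ∈ S x := fun x => ⟨t, b₀, rfl, hline⟩
  have hne : ∀ x, (S x).Nonempty := fun x => ⟨_, hmem x⟩
  have hd0 : (0:ℝ) < (j:ℝ) - i := by
    have : (i:ℝ) < j := by exact_mod_cast hij
    linarith
  have hi0 : (0:ℝ) ≤ i := Nat.cast_nonneg i
  have hj0 : (0:ℝ) < j := lt_of_le_of_lt hi0 (by linarith)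
  -- upper bound for elements of S x, for x ∈ [0, j]
  have helem_ub : ∀ x ∈ Icc (0:ℝ) j, ∀ y ∈ S x, y ≤ |c j| := by
    rintro x hx y ⟨a, b, rfl, hab⟩
    have hb0 : b ≤ 0 := by have := hab 0 hf0'; rw [hc0] at this; simpa using this
    have hbj := hab j hfj
    have hxj : x / j ≤ 1 := by rw [div_le_one hj0]; exact hx.2
    have hxj0 : 0 ≤ x / j := div_nonneg hx.1 hj0.le
    have key : a * x + b = (1 - x/j) * b + (x/j) * (a * j + b) := by
      field_simp; ring
    rw [key]
    have h1 : (1 - x/j) * b ≤ 0 := mul_nonpos_of_nonneg_of_nonpos (by linarith) hb0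
    have h2 : (x/j) * (a * j + b) ≤ (x/j) * c j := by
      apply mul_le_mul_of_nonneg_left hbj hxj0
    have h3 : (x/j) * c j ≤ |c j| := by
      rcases le_or_gt (c j) 0 with h | h
      · exact le_trans (mul_nonpos_of_nonneg_of_nonpos hxj0 h) (abs_nonneg _)
      · calc (x/j) * c j ≤ 1 * c j := mul_le_mul_of_nonneg_right hxj h.le
          _ = c j := one_mul _
          _ ≤ |c j| := le_abs_self _
    linarith
  have hbdd : ∀ x ∈ Icc (0:ℝ) j, BddAbove (S x) :=
    fun x hx => ⟨|c j|, fun y hy => helem_ub x hx y hy⟩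
  have hle_N : ∀ x ∈ Icc (0:ℝ) j, ∀ y ∈ S x, y ≤ N x :=
    fun x hx y hy => le_csSup (hbdd x hx) hy
  have hN_lb : ∀ x ∈ Icc (0:ℝ) j, t * x + b₀ ≤ N x :=
    fun x hx => hle_N x hx _ (hmem x)
  have hN_ub_pt : ∀ k : ℕ, f k ≠ 0 → (k:ℝ) ∈ Icc (0:ℝ) j → N k ≤ c k := by
    intro k hk hk2
    refine csSup_le (hne _) ?_
    rintro y ⟨a, b, rfl, hab⟩
    exact hab k hk
  have hconvex : ConvexOn ℝ (Icc (0:ℝ) j) N := by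
    refine ⟨convex_Icc _ _, ?_⟩
    intro x hx y hy p q hp hq hpq
    refine csSup_le (hne _) ?_
    rintro z ⟨a, b, rfl, hab⟩
    have h1 : a * x + b ≤ N x := hle_N x hx _ ⟨a, b, rfl, hab⟩
    have h2 : a * y + b ≤ N y := hle_N y hy _ ⟨a, b, rfl, hab⟩
    have : a * (p • x + q • y) + b = p * (a * x + b) + q * (a * y + b) := by
      have hq1 : q = 1 - p := by linarith
      simp only [smul_eq_mul]; rw [hq1]; ring
    rw [this, smul_eq_mul, smul_eq_mul]
    have := mul_le_mul_of_nonneg_left h1 hp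
    have := mul_le_mul_of_nonneg_left h2 hq
    linarith
  have hiIcc : (i:ℝ) ∈ Icc (0:ℝ) j := ⟨hi0, by linarith⟩
  have hjIcc : (j:ℝ) ∈ Icc (0:ℝ) j := ⟨hj0.le, le_refl _⟩
  have hNj_ub : N j ≤ c j := hN_ub_pt j hfj ⟨hj0.le, le_refl _⟩
  have hNi_ub : N i ≤ c i := hN_ub_pt i hfi hiIcc
  rcases htouch with ⟨hti, hslope⟩ | ⟨htj, hslope⟩
  · -- Case A : supporting line touches at i
    have hb₀ : b₀ = c i - t * i := by rw [hc]; dsimp only; linarith [hti]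
    have hlow : ∀ x ∈ Icc (0:ℝ) j, c i + t * (x - (i:ℝ)) ≤ N x := by
      intro x hx
      have := hN_lb x hx
      rw [hb₀] at this; linarith
    have hNi : N i = c i := le_antisymm hNi_ub (by have := hlow i hiIcc; simpa using this)
    set ε := (t + L) * ((j:ℝ) - i) - (c j - c i) with hε
    have hε0 : 0 < ε := by rw [hε]; dsimp only [c]; linarith [hslope]
    set δ := min (((j:ℝ) - i)/2) (ε/(2*L)) with hδ
    have hδ0 : 0 < δ := lt_min (by linarith) (by positivity)
    have hδ1 : δ ≤ ((j:ℝ) - i)/2 := min_le_left _ _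
    have hδ2 : δ ≤ ε/(2*L) := min_le_right _ _
    set β := (i:ℝ) + δ with hβ
    have hiβ : (i:ℝ) < β := by rw [hβ]; linarith
    have hβj : β < (j:ℝ) := by rw [hβ]; linarith
    -- the key chord bound near i
    have hchord : ∀ y : ℝ, (i:ℝ) < y → y ≤ β → N j - N y ≤ (t + L) * ((j:ℝ) - y) := by
      intro y hy1 hy2
      have hylow : c i + t * (y - (i:ℝ)) ≤ N y := hlow y ⟨by linarith, by linarith⟩
      have hLy : L * (y - (i:ℝ)) ≤ ε := by
        have h1 : y - (i:ℝ) ≤ ε/(2*L) := by linarith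
        have h2 : L * (y - (i:ℝ)) ≤ L * (ε/(2*L)) := mul_le_mul_of_nonneg_left h1 hL.le
        have h3 : L * (ε/(2*L)) = ε/2 := by field_simp
        linarith
      have : c j - (c i + t * (y - (i:ℝ))) ≤ (t + L) * ((j:ℝ) - y) := by nlinarith [hε0]
      linarith [hNj_ub]
    -- monotonicity of N - t x on [i, j]
    have hmono : ∀ u v : ℝ, (i:ℝ) ≤ u → u ≤ v → v ≤ (j:ℝ) → t * (v - u) ≤ N v - N u := by
      intro u v hu huv hv
      rcases eq_or_lt_of_le huv with rfl | huv
      · simp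
      rcases eq_or_lt_of_le hu with rfl | hu
      · have := hlow v ⟨by linarith, hv⟩
        rw [hNi]; linarith
      · have hadj := hconvex.slope_mono_adjacent (x := (i:ℝ)) (y := u) (z := v)
          hiIcc ⟨by linarith, hv⟩ hu huv
        have hulow : c i + t * (u - (i:ℝ)) ≤ N u := hlow u ⟨by linarith, by linarith⟩
        have h1 : t ≤ (N u - N i) / (u - (i:ℝ)) := by
          rw [le_div_iff₀ (by linarith : (0:ℝ) < u - i), hNi]; linarith
        have h2 : t ≤ (N v - N u) / (v - u) := le_trans h1 hadj
        rw [le_div_iff₀ (by linarith : (0:ℝ) < v - u)] at h2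
        linarith
    -- clamp and monotone auxiliary function
    set clamp : ℝ → ℝ := fun x => max (i:ℝ) (min β x) with hclamp
    have hclamp_mem : ∀ x, (i:ℝ) ≤ clamp x ∧ clamp x ≤ β := by
      intro x
      constructor
      · exact le_max_left _ _
      · exact max_le hiβ.le (min_le_left _ _)
    have hclamp_mono : Monotone clamp := fun x y hxy =>
      max_le_max (le_refl _) (min_le_min (le_refl _) hxy)
    set G : ℝ → ℝ := fun x => N (clamp x) - t * clamp x with hG
    have hGmono : Monotone G := by
      intro x y hxy
      have h1 := hclamp_mem x
      have h2 := hclamp_mem y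
      have h3 : clamp x ≤ clamp y := hclamp_mono hxy
      have := hmono (clamp x) (clamp y) h1.1 h3 (by linarith [h2.2])
      dsimp only [G]; linarith
    obtain ⟨x₀, hx₀, hdiff⟩ := exists_diff_pt hGmono hiβ
    have hclamp_id : ∀ y ∈ Ioo (i:ℝ) β, clamp y = y := by
      intro y hy
      dsimp only [clamp]
      rw [min_eq_right hy.2.le, max_eq_right hy.1.le]
    have hGd : HasDerivAt G (deriv G x₀) x₀ := hdiff.hasDerivAt
    have hGt : HasDerivAt (fun x => G x + t * x) (deriv G x₀ + t) x₀ := by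
      exact (hGd.add ((hasDerivAt_id x₀).const_mul t)).congr_deriv (by simp)
    have heq : N =ᶠ[𝓝 x₀] (fun x => G x + t * x) := by
      filter_upwards [Ioo_mem_nhds hx₀.1 hx₀.2] with y hy
      dsimp only [G]
      rw [hclamp_id y hy]; ring
    have hd : HasDerivAt N (deriv G x₀ + t) x₀ := hGt.congr_of_eventuallyEq heq
    set σ := deriv G x₀ + t with hσ
    have hσ_ge : t ≤ σ := by
      refine deriv_ge hd hx₀.2 ?_
      intro y hy
      have := hmono x₀ y hx₀.1.le hy.1.le (by linarith [hy.2])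
      linarith
    have hσ_le : σ ≤ t + L := by
      refine deriv_le hd hx₀.2 ?_
      intro y hy
      have hadj := hconvex.slope_mono_adjacent (x := x₀) (y := y) (z := (j:ℝ))
        ⟨by linarith [hx₀.1], by linarith [hx₀.2]⟩ hjIcc hy.1 (by linarith [hy.2])
      have hch := hchord y (by linarith [hy.1, hx₀.1]) hy.2.le
      have h1 : (N j - N y) / ((j:ℝ) - y) ≤ t + L := by
        rw [div_le_iff₀ (by linarith [hy.2] : (0:ℝ) < (j:ℝ) - y)]
        linarith
      have h2 : (N y - N x₀) / (y - x₀) ≤ t + L := le_trans hadj h1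
      rw [div_le_iff₀ (by linarith [hy.1] : (0:ℝ) < y - x₀)] at h2
      linarith
    refine ⟨σ, x₀, by linarith [hx₀.1], by linarith [hx₀.2], hd, ?_⟩
    rw [abs_le]
    constructor <;> linarith
  · -- Case B : supporting line touches at j
    have hb₀ : b₀ = c j - t * j := by rw [hc]; dsimp only; linarith [htj]
    have hlow : ∀ x ∈ Icc (0:ℝ) j, c j + t * (x - (j:ℝ)) ≤ N x := by
      intro x hx
      have := hN_lb x hx
      rw [hb₀] at this; linarith
    have hNj : N j = c j := le_antisymm hNj_ub (by have := hlow j hjIcc; simpa using this)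
    set ε := (c j - c i) - (t - L) * ((j:ℝ) - i) with hε
    have hε0 : 0 < ε := by rw [hε]; dsimp only [c]; linarith [hslope]
    set δ := min (((j:ℝ) - i)/2) (ε/(2*L)) with hδ
    have hδ0 : 0 < δ := lt_min (by linarith) (by positivity)
    have hδ1 : δ ≤ ((j:ℝ) - i)/2 := min_le_left _ _
    have hδ2 : δ ≤ ε/(2*L) := min_le_right _ _
    set β := (j:ℝ) - δ with hβ
    have hiβ : (i:ℝ) < β := by rw [hβ]; linarith
    have hβj : β < (j:ℝ) := by rw [hβ]; linarith
    -- key chord bound near j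
    have hchord : ∀ y : ℝ, β ≤ y → y < (j:ℝ) → (t - L) * (y - (i:ℝ)) ≤ N y - N i := by
      intro y hy1 hy2
      have hylow : c j + t * (y - (j:ℝ)) ≤ N y := hlow y ⟨by linarith, by linarith⟩
      have hLy : L * ((j:ℝ) - y) ≤ ε := by
        have h1 : (j:ℝ) - y ≤ ε/(2*L) := by linarith
        have h2 : L * ((j:ℝ) - y) ≤ L * (ε/(2*L)) := mul_le_mul_of_nonneg_left h1 hL.le
        have h3 : L * (ε/(2*L)) = ε/2 := by field_simp
        linarith
      have : (t - L) * (y - (i:ℝ)) ≤ (c j + t * (y - (j:ℝ))) - c i := by nlinarith [hε0]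
      linarith [hNi_ub]
    -- anti-monotonicity : N v - N u ≤ t (v - u) on [i, j]
    have hmono : ∀ u v : ℝ, (i:ℝ) ≤ u → u ≤ v → v ≤ (j:ℝ) → N v - N u ≤ t * (v - u) := by
      intro u v hu huv hv
      rcases eq_or_lt_of_le huv with rfl | huv
      · simp
      rcases eq_or_lt_of_le hv with rfl | hv
      · have := hlow u ⟨by linarith, by linarith⟩
        rw [hNj]; linarith
      · have hadj := hconvex.slope_mono_adjacent (x := u) (y := v) (z := (j:ℝ))
          ⟨by linarith, by linarith⟩ hjIcc huv hv
        have hvlow : c j + t * (v - (j:ℝ)) ≤ N v := hlow v ⟨by linarith, by linarith⟩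
        have h1 : (N j - N v) / ((j:ℝ) - v) ≤ t := by
          rw [div_le_iff₀ (by linarith : (0:ℝ) < (j:ℝ) - v), hNj]; linarith
        have h2 : (N v - N u) / (v - u) ≤ t := le_trans hadj h1
        rw [div_le_iff₀ (by linarith : (0:ℝ) < v - u)] at h2
        linarith
    set clamp : ℝ → ℝ := fun x => max β (min (j:ℝ) x) with hclamp
    have hclamp_mem : ∀ x, β ≤ clamp x ∧ clamp x ≤ (j:ℝ) := by
      intro x
      exact ⟨le_max_left _ _, max_le hβj.le (min_le_left _ _)⟩
    have hclamp_mono : Monotone clamp := fun x y hxy =>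
      max_le_max (le_refl _) (min_le_min (le_refl _) hxy)
    set G : ℝ → ℝ := fun x => t * clamp x - N (clamp x) with hG
    have hGmono : Monotone G := by
      intro x y hxy
      have h1 := hclamp_mem x
      have h2 := hclamp_mem y
      have h3 : clamp x ≤ clamp y := hclamp_mono hxy
      have := hmono (clamp x) (clamp y) (by linarith [h1.1, hiβ.le]) h3 h2.2
      dsimp only [G]; linarith
    obtain ⟨x₀, hx₀, hdiff⟩ := exists_diff_pt hGmono hβj
    have hclamp_id : ∀ y ∈ Ioo β (j:ℝ), clamp y = y := by
      intro y hy
      dsimp only [clamp]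
      rw [min_eq_right hy.2.le, max_eq_right hy.1.le]
    have hGd : HasDerivAt G (deriv G x₀) x₀ := hdiff.hasDerivAt
    have hGt : HasDerivAt (fun x => t * x - G x) (t - deriv G x₀) x₀ := by
      exact (((hasDerivAt_id x₀).const_mul t).sub hGd).congr_deriv (by simp)
    have heq : N =ᶠ[𝓝 x₀] (fun x => t * x - G x) := by
      filter_upwards [Ioo_mem_nhds hx₀.1 hx₀.2] with y hy
      dsimp only [G]
      rw [hclamp_id y hy]; ring
    have hd : HasDerivAt N (t - deriv G x₀) x₀ := hGt.congr_of_eventuallyEq heq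
    set σ := t - deriv G x₀ with hσ
    have hσ_le : σ ≤ t := by
      refine deriv_le hd hx₀.2 ?_
      intro y hy
      have := hmono x₀ y (by linarith [hx₀.1, hiβ.le]) hy.1.le (by linarith [hy.2])
      linarith
    have hσ_ge : t - L ≤ σ := by
      refine deriv_ge hd hx₀.2 ?_
      intro y hy
      have hix₀ : (i:ℝ) < x₀ := lt_trans hiβ hx₀.1
      have hadj := hconvex.slope_mono_adjacent (x := (i:ℝ)) (y := x₀) (z := y)
        hiIcc ⟨by linarith [hy.1, hx₀.1], by linarith [hy.2]⟩ hix₀ hy.1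
      have hch := hchord x₀ hx₀.1.le hx₀.2
      have h1 : t - L ≤ (N x₀ - N i) / (x₀ - (i:ℝ)) := by
        rw [le_div_iff₀ (by linarith : (0:ℝ) < x₀ - (i:ℝ))]
        linarith
      have h2 : t - L ≤ (N y - N x₀) / (y - x₀) := le_trans h1 hadj
      rw [le_div_iff₀ (by linarith [hy.1] : (0:ℝ) < y - x₀)] at h2
      linarith
    refine ⟨σ, x₀, by linarith [hx₀.1, hiβ, hi0], by linarith [hx₀.2], hd, ?_⟩
    rw [abs_le]
    constructor <;> linarith

set_option maxHeartbeats 2000000 in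
theorem stmt16 (f : ℕ → ℂ) (hf0 : f 0 = 1) (C ρ : ℝ) (hρ : 0 < ρ)
    (hconv : ∀ m, ‖f m‖ ≤ C / ρ ^ m)
    (ξ : ℂ) (hξ : ‖ξ‖ < ρ) (hzero : (∑' k : ℕ, f k * ξ ^ k) = 0) :
    ∃ σ x : ℝ, 0 ≤ x ∧ (∃ k : ℕ, f k ≠ 0 ∧ x ≤ (k : ℝ)) ∧
      HasDerivAt (newtonPolygon f) σ x ∧ |Real.log ‖ξ‖ - σ| ≤ Real.log 3 := by
  have hξ0 : ξ ≠ 0 := by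
    intro h
    rw [h] at hzero
    have : (∑' k : ℕ, f k * (0:ℂ) ^ k) = f 0 := by
      rw [tsum_eq_single 0]
      · simp
      · intro b hb; simp [zero_pow hb]
    rw [this, hf0] at hzero
    exact one_ne_zero hzero
  have hnξ : (0:ℝ) < ‖ξ‖ := norm_pos_iff.2 hξ0
  set t := Real.log ‖ξ‖ with ht
  set r := ‖ξ‖ / ρ with hr
  have hr0 : 0 < r := div_pos hnξ hρ
  have hr1 : r < 1 := (div_lt_one hρ).2 hξ
  set g : ℕ → ℝ := fun k => ‖f k * ξ ^ k‖ with hg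
  have hg_le : ∀ k, g k ≤ C * r ^ k := by
    intro k
    have h1 : g k = ‖f k‖ * ‖ξ‖ ^ k := by rw [hg]; simp [norm_mul, norm_pow]
    rw [h1, hr, div_pow]
    calc ‖f k‖ * ‖ξ‖^k ≤ (C / ρ^k) * ‖ξ‖^k :=
          mul_le_mul_of_nonneg_right (hconv k) (by positivity)
      _ = C * (‖ξ‖^k / ρ^k) := by ring
  have hgnonneg : ∀ k, 0 ≤ g k := fun k => norm_nonneg _
  have hsum : Summable (fun k => ‖f k * ξ ^ k‖) :=
    Summable.of_nonneg_of_le (fun k => norm_nonneg _) hg_le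
      ((summable_geometric_of_lt_one hr0.le hr1).mul_left C)
  have hsumu : Summable (fun k : ℕ => f k * ξ ^ k) := hsum.of_norm
  have hg0 : g 0 = 1 := by rw [hg]; simp [hf0]
  -- global max of g
  have htend : Tendsto (fun k : ℕ => C * r ^ k) atTop (𝓝 0) := by
    have := (tendsto_pow_atTop_nhds_zero_of_lt_one hr0.le hr1).const_mul C
    simpa using this
  obtain ⟨K, hK⟩ := (htend.eventually_lt_const one_pos).exists_forall_of_atTop
  obtain ⟨k₀, hk₀mem, hk₀max⟩ :=
    (Finset.range (K+1)).exists_max_image g ⟨0, Finset.mem_range.2 (Nat.succ_pos K)⟩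
  have hmax : ∀ k, g k ≤ g k₀ := by
    intro k
    rcases le_or_gt k K with h | h
    · exact hk₀max k (Finset.mem_range.2 (Nat.lt_succ_of_le h))
    · have h1 : g k ≤ C * r ^ k := hg_le k
      have h2 : C * r ^ k < 1 := hK k h.le
      have h3 : g 0 ≤ g k₀ := hk₀max 0 (Finset.mem_range.2 (Nat.succ_pos K))
      rw [hg0] at h3
      linarith
  have hgk₀1 : 1 ≤ g k₀ := hg0 ▸ hmax 0
  have hfk₀ : f k₀ ≠ 0 := by
    intro h
    have : g k₀ = 0 := by rw [hg]; simp [h]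
    linarith
  -- exists k₁ with g k₁ > g k₀ * (1/3)^(dist)
  set e : ℕ → ℕ := fun k => if k < k₀ then k₀ - k else k - k₀ with he
  have hk₁ex : ∃ k₁, k₁ ≠ k₀ ∧ g k₀ * (1/3:ℝ)^(e k₁) < g k₁ := by
    by_contra hcon
    push_neg at hcon
    set w1 : ℕ → ℝ := fun k => if k < k₀ then (1/3:ℝ)^(k₀ - k) else 0 with hw1
    set w2 : ℕ → ℝ := fun k => if k₀ < k then (1/3:ℝ)^(k - k₀) else 0 with hw2
    have hsumw1 : Summable w1 := by
      apply summable_of_ne_finset_zero (s := Finset.range k₀)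
      intro k hk
      rw [Finset.mem_range, not_lt] at hk
      rw [hw1]; simp [Nat.not_lt.2 hk]
    have hsumw2 : Summable w2 := by
      rw [← summable_nat_add_iff (k₀+1)]
      have : (fun n : ℕ => w2 (n + (k₀+1))) = fun n : ℕ => (1/3:ℝ)^(n+1) := by
        funext n
        rw [hw2]
        have h1 : k₀ < n + (k₀ + 1) := by omega
        have h2 : n + (k₀ + 1) - k₀ = n + 1 := by omega
        simp only [if_pos h1, h2]
      rw [this]
      exact ((summable_geometric_of_lt_one (r := (1/3:ℝ)) (by norm_num)
        (by norm_num)).mul_left (1/3:ℝ)).congr (fun n => by rw [pow_succ]; ring)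
    have hw1n : ∀ k, 0 ≤ w1 k := by
      intro k; rw [hw1]; dsimp only; split <;> positivity
    have hw2n : ∀ k, 0 ≤ w2 k := by
      intro k; rw [hw2]; dsimp only; split <;> positivity
    have hv_le : ∀ k, (if k = k₀ then (0:ℝ) else g k) ≤ g k₀ * (w1 k + w2 k) := by
      intro k
      rcases eq_or_ne k k₀ with rfl | hk
      · rw [if_pos rfl]
        have := hw1n k; have := hw2n k
        nlinarith
      · rw [if_neg hk]
        have hck := hcon k hk
        rcases lt_trichotomy k k₀ with h | h | h
        · have he1 : e k = k₀ - k := if_pos h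
          have hw1e : w1 k = (1/3:ℝ)^(k₀ - k) := if_pos h
          have hw2e : w2 k = 0 := if_neg (by omega)
          rw [he1] at hck
          rw [hw1e, hw2e, add_zero]
          exact hck
        · exact absurd h hk
        · have he1 : e k = k - k₀ := if_neg (by omega)
          have hw1e : w1 k = 0 := if_neg (by omega)
          have hw2e : w2 k = (1/3:ℝ)^(k - k₀) := if_pos h
          rw [he1] at hck
          rw [hw1e, hw2e, zero_add]
          exact hck
    have hsum_vr : Summable (fun k => if k = k₀ then (0:ℝ) else g k) :=
      Summable.of_nonneg_of_le (fun k => by split; exacts [le_refl 0, hgnonneg k])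
        (fun k => by split; exacts [hgnonneg k, le_refl _]) hsum
    have h0 : f k₀ * ξ^k₀ = -∑' k, if k = k₀ then (0:ℂ) else f k * ξ^k := by
      have h1 := Summable.tsum_eq_add_tsum_ite hsumu k₀
      rw [hzero] at h1
      exact eq_neg_of_add_eq_zero_left h1.symm
    have hnorm_eq : ∀ k, ‖if k = k₀ then (0:ℂ) else f k * ξ^k‖
        = (if k = k₀ then (0:ℝ) else g k) := by
      intro k; split <;> simp [hg]
    have hgk₀le : g k₀ ≤ ∑' k, if k = k₀ then (0:ℝ) else g k := by
      have h2 : g k₀ = ‖∑' k, if k = k₀ then (0:ℂ) else f k * ξ^k‖ := by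
        rw [hg]; dsimp only; rw [h0, norm_neg]
      rw [h2]
      have h3 : Summable (fun k => ‖if k = k₀ then (0:ℂ) else f k * ξ^k‖) := by
        apply Summable.congr hsum_vr
        intro k; rw [hnorm_eq k]
      calc ‖∑' k, if k = k₀ then (0:ℂ) else f k * ξ^k‖
          ≤ ∑' k, ‖if k = k₀ then (0:ℂ) else f k * ξ^k‖ := norm_tsum_le_tsum_norm h3
        _ = ∑' k, (if k = k₀ then (0:ℝ) else g k) := tsum_congr hnorm_eq
    have hs2 : Summable (fun k => g k₀ * (w1 k + w2 k)) := (hsumw1.add hsumw2).mul_left _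
    have hbound : ∑' k, (if k = k₀ then (0:ℝ) else g k)
        ≤ g k₀ * ((∑' k, w1 k) + (∑' k, w2 k)) := by
      calc ∑' k, (if k = k₀ then (0:ℝ) else g k) ≤ ∑' k, g k₀ * (w1 k + w2 k) :=
            Summable.tsum_le_tsum hv_le hsum_vr hs2
        _ = g k₀ * ((∑' k, w1 k) + (∑' k, w2 k)) := by
            rw [tsum_mul_left, Summable.tsum_add hsumw1 hsumw2]
    have hw1sum : ∑' k, w1 k = 1/2 - (1/2)*(1/3:ℝ)^k₀ := by
      rw [tsum_eq_sum (s := Finset.range k₀) (by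
        intro k hk
        rw [Finset.mem_range, not_lt] at hk
        rw [hw1]; exact if_neg (by omega))]
      have h4 : ∀ k ∈ Finset.range k₀, w1 k = (1/3:ℝ)^(k₀ - k) := by
        intro k hk
        rw [Finset.mem_range] at hk
        rw [hw1]; exact if_pos hk
      rw [Finset.sum_congr rfl h4]
      have h5 := Finset.sum_range_reflect (fun j => (1/3:ℝ)^(j+1)) k₀
      rw [geom_partial] at h5
      rw [← h5]
      apply Finset.sum_congr rfl
      intro k hk
      rw [Finset.mem_range] at hk
      congr 1
      omega
    have hw2sum : ∑' k, w2 k = 1/2 := by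
      have h6 := Summable.sum_add_tsum_nat_add (f := w2) (k₀+1) hsumw2
      have h7 : ∑ k ∈ Finset.range (k₀+1), w2 k = 0 := by
        apply Finset.sum_eq_zero
        intro k hk
        rw [Finset.mem_range] at hk
        rw [hw2]; exact if_neg (by omega)
      have h8 : ∀ n : ℕ, w2 (n + (k₀+1)) = (1/3:ℝ)*(1/3:ℝ)^n := by
        intro n
        rw [hw2]
        have h9 : k₀ < n + (k₀ + 1) := by omega
        have h10 : n + (k₀ + 1) - k₀ = n + 1 := by omega
        simp only [if_pos h9, h10, pow_succ]
        ring
      rw [h7, zero_add, tsum_congr h8, tsum_mul_left,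
        tsum_geometric_of_lt_one (by norm_num) (by norm_num)] at h6
      rw [← h6]
      norm_num
    rw [hw1sum, hw2sum] at hbound
    have hfin : g k₀ ≤ g k₀ * (1 - (1/2)*(1/3:ℝ)^k₀) := by
      have : (1/2 - (1/2)*(1/3:ℝ)^k₀ + 1/2) = 1 - (1/2)*(1/3:ℝ)^k₀ := by ring
      rw [this] at hbound
      linarith
    nlinarith [pow_pos (by norm_num : (0:ℝ) < 1/3) k₀]
  obtain ⟨k₁, hk₁ne, hk₁gt⟩ := hk₁ex
  have hgpos : ∀ k, f k ≠ 0 → 0 < g k := by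
    intro k hk
    rw [hg]
    exact norm_pos_iff.2 (mul_ne_zero hk (pow_ne_zero _ hξ0))
  have hfk₁ : f k₁ ≠ 0 := by
    intro h
    have h1 : g k₁ = 0 := by rw [hg]; simp [h]
    have h2 : (0:ℝ) < g k₀ * (1/3)^(e k₁) :=
      mul_pos (by linarith) (pow_pos (by norm_num) _)
    linarith
  set c : ℕ → ℝ := fun k => -Real.log ‖f k‖ with hcdef
  have hlogg : ∀ k, f k ≠ 0 → Real.log (g k) = -(c k) + k * t := by
    intro k hk
    have h1 : g k = ‖f k‖ * ‖ξ‖^k := by rw [hg]; simp [norm_mul, norm_pow]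
    rw [h1, Real.log_mul (ne_of_gt (norm_pos_iff.2 hk)) (pow_ne_zero _ (ne_of_gt hnξ)),
      Real.log_pow, hcdef]
    simp [ht]
  have hline : ∀ k : ℕ, f k ≠ 0 → t * k + (c k₀ - t * k₀) ≤ c k := by
    intro k hk
    have h2 := Real.log_le_log (hgpos k hk) (hmax k)
    rw [hlogg k hk, hlogg k₀ hfk₀] at h2
    linarith
  have hL0 : (0:ℝ) < Real.log 3 := Real.log_pos (by norm_num)
  have hkey := Real.log_lt_log (mul_pos (by linarith : (0:ℝ) < g k₀)
    (pow_pos (by norm_num) _)) hk₁gt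
  rw [Real.log_mul (ne_of_gt (by linarith : (0:ℝ) < g k₀))
    (pow_ne_zero _ (by norm_num : (1/3:ℝ) ≠ 0)), Real.log_pow,
    hlogg k₁ hfk₁, hlogg k₀ hfk₀] at hkey
  have h13 : Real.log (1/3:ℝ) = -Real.log 3 := by rw [one_div, Real.log_inv]
  rw [h13] at hkey
  rcases lt_or_gt_of_ne hk₁ne with hlt | hgt
  · -- k₁ < k₀ : right touch
    have hek : e k₁ = k₀ - k₁ := if_pos hlt
    rw [hek] at hkey
    have hcast : ((k₀ - k₁ : ℕ) : ℝ) = (k₀:ℝ) - k₁ := by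
      push_cast [Nat.cast_sub hlt.le]; ring
    rw [hcast] at hkey
    obtain ⟨σ, x, hx0, hxj, hd, habs⟩ := core f hf0 t (Real.log 3) (c k₀ - t*k₀) hL0
      k₁ k₀ hlt hfk₁ hfk₀ hline
      (Or.inr ⟨by simp only [hcdef]; ring, by simp only [hcdef] at hkey ⊢; nlinarith⟩)
    exact ⟨σ, x, hx0, ⟨k₀, hfk₀, hxj⟩, hd, habs⟩
  · -- k₀ < k₁ : left touch
    have hek : e k₁ = k₁ - k₀ := if_neg (by omega)
    rw [hek] at hkey
    have hcast : ((k₁ - k₀ : ℕ) : ℝ) = (k₁:ℝ) - k₀ := by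
      push_cast [Nat.cast_sub hgt.le]; ring
    rw [hcast] at hkey
    obtain ⟨σ, x, hx0, hxj, hd, habs⟩ := core f hf0 t (Real.log 3) (c k₀ - t*k₀) hL0
      k₀ k₁ hgt hfk₀ hfk₁ hline
      (Or.inl ⟨by simp only [hcdef]; ring, by simp only [hcdef] at hkey ⊢; nlinarith⟩)
    exact ⟨σ, x, hx0, ⟨k₁, hfk₁, hxj⟩, hd, habs⟩
end
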